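/- Let Q be the output of the Frequent Directions algorithm run on an n×d matrix A with parameter ℓ, and let Δ = ∑_{i=1}^n δ_i. Then for any integer k with 0 ≤ k < ℓ, Δ ≤ ‖A − A_k‖_F² / (ℓ − k). -/

import Mathlib

open Matrix

/-- The squared Euclidean norm of a vector in `ℝ^m`. -/
noncomputable def sqNorm {m : ℕ} (v : Fin m → ℝ) : ℝ := ∑ i, v i ^ 2

/-- The squared Frobenius norm of a real matrix. -/
noncomputable def frobSq {m p : ℕ} (M : Matrix (Fin m) (Fin p) ℝ) : ℝ :=
  ∑ i, ∑ j, M i j ^ 2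

lemma sqNorm_eq_dot {m : ℕ} (v : Fin m → ℝ) : sqNorm v = v ⬝ᵥ v := by
  simp [sqNorm, dotProduct, sq]

lemma sqNorm_nonneg' {m : ℕ} (v : Fin m → ℝ) : 0 ≤ sqNorm v :=
  Finset.sum_nonneg fun _ _ => sq_nonneg _

lemma dot_self_mulVec {p q : ℕ} (M : Matrix (Fin p) (Fin q) ℝ) (w : Fin q → ℝ) :
    sqNorm (M.mulVec w) = w ⬝ᵥ ((Mᵀ * M).mulVec w) := by
  rw [sqNorm_eq_dot, Matrix.dotProduct_mulVec, ← Matrix.mulVec_transpose,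
    Matrix.mulVec_mulVec, dotProduct_comm]

lemma sqNorm_mulVec_orth {p q : ℕ} (M : Matrix (Fin p) (Fin q) ℝ)
    (h : Mᵀ * M = 1) (w : Fin q → ℝ) : sqNorm (M.mulVec w) = sqNorm w := by
  rw [dot_self_mulVec, h, Matrix.one_mulVec, sqNorm_eq_dot]

lemma sqNorm_transpose_mulVec_le {p q : ℕ} (M : Matrix (Fin p) (Fin q) ℝ)
    (h : Mᵀ * M = 1) (x : Fin p → ℝ) : sqNorm (Mᵀ.mulVec x) ≤ sqNorm x := by
  have hxu : x ⬝ᵥ (M.mulVec (Mᵀ.mulVec x)) = sqNorm (Mᵀ.mulVec x) := by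
    rw [Matrix.dotProduct_mulVec, ← Matrix.mulVec_transpose, sqNorm_eq_dot]
  have huu : sqNorm (M.mulVec (Mᵀ.mulVec x)) = sqNorm (Mᵀ.mulVec x) :=
    sqNorm_mulVec_orth M h _
  have expand : sqNorm (x - M.mulVec (Mᵀ.mulVec x))
      = sqNorm x - 2 * (x ⬝ᵥ M.mulVec (Mᵀ.mulVec x)) + sqNorm (M.mulVec (Mᵀ.mulVec x)) := by
    rw [sqNorm_eq_dot, sqNorm_eq_dot, sqNorm_eq_dot, sub_dotProduct,
      dotProduct_sub, dotProduct_sub,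
      dotProduct_comm (M.mulVec (Mᵀ.mulVec x)) x]
    ring
  nlinarith [sqNorm_nonneg' (x - M.mulVec (Mᵀ.mulVec x))]

lemma sum_update_zero {p : ℕ} (f : Fin p → ℝ) (r : Fin p) (c : ℝ) (hf : f r = 0) :
    ∑ j, Function.update f r c j = c + ∑ j, f j := by
  rw [Finset.sum_update_of_mem (Finset.mem_univ r), Finset.sdiff_singleton_eq_erase,
    ← Finset.add_sum_erase _ f (Finset.mem_univ r), hf, zero_add]

lemma sqNorm_update {p : ℕ} (g : Fin p → ℝ) (r : Fin p) (c : ℝ) (hg : g r = 0) :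
    sqNorm (Function.update g r c) = c ^ 2 + sqNorm g := by
  unfold sqNorm
  have h : ∀ j, (Function.update g r c j) ^ 2
      = Function.update (fun j => g j ^ 2) r (c ^ 2) j := by
    intro j; by_cases hj : j = r
    · subst hj; simp
    · simp [Function.update_of_ne hj]
  simp_rw [h]
  exact sum_update_zero _ r _ (by simp [hg])

lemma mulVec_updateRow' {p q : ℕ} (M : Matrix (Fin p) (Fin q) ℝ) (r : Fin p)
    (b : Fin q → ℝ) (x : Fin q → ℝ) :
    (M.updateRow r b).mulVec x = Function.update (M.mulVec x) r (b ⬝ᵥ x) := by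
  ext j
  by_cases hj : j = r
  · subst hj; simp [Matrix.mulVec]
  · simp [Matrix.mulVec, Matrix.updateRow_apply, hj, Function.update_of_ne hj]

lemma frobSq_eq_sum_rows {p q : ℕ} (M : Matrix (Fin p) (Fin q) ℝ) :
    frobSq M = ∑ j, sqNorm (M j) := rfl

lemma frobSq_eq_sum_cols {p q : ℕ} (M : Matrix (Fin p) (Fin q) ℝ) :
    frobSq M = ∑ t, sqNorm (fun j => M j t) := by
  rw [frobSq, Finset.sum_comm]; rfl

lemma frobSq_mul_orth {p q r : ℕ} (Z : Matrix (Fin p) (Fin q) ℝ) (hZ : Zᵀ * Z = 1)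
    (M : Matrix (Fin q) (Fin r) ℝ) : frobSq (Z * M) = frobSq M := by
  rw [frobSq_eq_sum_cols, frobSq_eq_sum_cols]
  refine Finset.sum_congr rfl fun t _ => ?_
  have h : (fun j => (Z * M) j t) = Z.mulVec (fun a => M a t) := by
    ext j; simp [Matrix.mul_apply, Matrix.mulVec, dotProduct]
  rw [h, sqNorm_mulVec_orth Z hZ]

lemma frobSq_updateRow {p q : ℕ} (M : Matrix (Fin p) (Fin q) ℝ) (r : Fin p)
    (b : Fin q → ℝ) (hM : M r = 0) :
    frobSq (M.updateRow r b) = sqNorm b + frobSq M := by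
  rw [frobSq_eq_sum_rows, frobSq_eq_sum_rows]
  have h : ∀ j, sqNorm (M.updateRow r b j)
      = Function.update (fun j => sqNorm (M j)) r (sqNorm b) j := by
    intro j; by_cases hj : j = r
    · subst hj; simp
    · rw [Matrix.updateRow_ne hj, Function.update_of_ne hj]
  simp_rw [h]
  exact sum_update_zero _ r _ (by simp [hM, sqNorm])

lemma telescope_fin {n : ℕ} (f : Fin (n + 1) → ℝ) :
    ∑ i : Fin n, (f i.succ - f i.castSucc) = f (Fin.last n) - f 0 := by
  induction n with
  | zero => simp
  | succ n ih =>
    rw [Fin.sum_univ_castSucc]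
    have h : ∀ i : Fin n, (f (i.castSucc).succ - f (i.castSucc).castSucc)
        = ((fun j : Fin (n+1) => f j.castSucc) i.succ
          - (fun j : Fin (n+1) => f j.castSucc) i.castSucc) := by
      intro i; simp only [Fin.succ_castSucc]
    simp_rw [h]
    rw [ih (fun j => f j.castSucc)]
    simp [Fin.succ_last]


/-- Let `Q` be the output of the Frequent Directions algorithm run on an
`n × d` matrix `A` with parameter `ℓ`, and let `Δ = ∑_{i=1}^n δ_i`.  Then for
any integer `k` with `0 ≤ k < ℓ`, `Δ ≤ ‖A - A_k‖_F² / (ℓ - k)`, where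
`‖A - A_k‖_F² = ‖A‖_F² - ∑_{i=1}^k ‖A v_i‖²` for right singular vectors
`v_1, …, v_d` of `A` ordered by decreasing singular values. -/
theorem fd_delta_le_residual
    (n d ℓ : ℕ) (hℓ : 0 < ℓ)
    (A : Matrix (Fin n) (Fin d) ℝ)
    (Q : Fin (n + 1) → Matrix (Fin ℓ) (Fin d) ℝ)
    (C : Fin n → Matrix (Fin ℓ) (Fin d) ℝ)
    (Z : Fin n → Matrix (Fin ℓ) (Fin ℓ) ℝ)
    (Y : Fin n → Matrix (Fin d) (Fin ℓ) ℝ)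
    (s : Fin n → Fin ℓ → ℝ) (δ : Fin n → ℝ)
    -- the algorithm starts with the zero matrix
    (hQ0 : Q 0 = 0)
    -- `C i` is `Q^{i-1}` with its last row replaced by the `i`-th row of `A`
    (hC : ∀ i : Fin n,
      C i = (Q i.castSucc).updateRow ⟨ℓ - 1, Nat.sub_lt hℓ Nat.one_pos⟩ (A i))
    -- a singular value decomposition `C i = Z S Yᵀ` of `C i`
    (hZ : ∀ i, (Z i)ᵀ * Z i = 1)
    (hY : ∀ i, (Y i)ᵀ * Y i = 1)
    (hSVD : ∀ i, C i = Z i * Matrix.diagonal (s i) * (Y i)ᵀ)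
    (hmono : ∀ i, ∀ j j' : Fin ℓ, j ≤ j' → s i j' ≤ s i j)
    (hnn : ∀ i j, 0 ≤ s i j)
    -- `δ i` is the square of the smallest singular value of `C i`
    (hδ : ∀ i, δ i = s i ⟨ℓ - 1, Nat.sub_lt hℓ Nat.one_pos⟩ ^ 2)
    -- the shrinking step producing `Q^i = S' Yᵀ`
    (hQs : ∀ i : Fin n,
      Q i.succ = Matrix.diagonal (fun j => Real.sqrt (s i j ^ 2 - δ i)) * (Y i)ᵀ)
    -- `v` is an orthonormal family of right singular vectors of `A`,
    -- ordered by decreasing singular values `σA`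
    (v : Fin d → Fin d → ℝ) (σA : Fin d → ℝ)
    (hv : ∀ a b : Fin d, ∑ t, v a t * v b t = if a = b then 1 else 0)
    (hσmono : ∀ a b : Fin d, a ≤ b → σA b ≤ σA a)
    (hσnn : ∀ a, 0 ≤ σA a)
    (hAv : ∀ a, (Aᵀ * A).mulVec (v a) = σA a ^ 2 • v a)
    (k : ℕ) (hk : k < ℓ) :
    (∑ i, δ i) ≤
      (frobSq A - ∑ i ∈ Finset.univ.filter (fun i : Fin d => (i : ℕ) < k), sqNorm (A.mulVec (v i))) / ((ℓ : ℝ) - (k : ℝ)) := by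
  classical
  let r : Fin ℓ := ⟨ℓ - 1, Nat.sub_lt hℓ Nat.one_pos⟩
  -- the last row of every Q is zero
  have hlast : ∀ i : Fin (n + 1), Q i r = 0 := by
    intro i
    induction i using Fin.cases with
    | zero => rw [hQ0]; rfl
    | succ j =>
      rw [hQs j]
      ext t
      have h0 : Real.sqrt (s j r ^ 2 - δ j) = 0 := by
        rw [hδ j]
        show Real.sqrt (s j r ^ 2 - s j r ^ 2) = 0
        simp
      simp [Matrix.mul_apply, Matrix.diagonal_apply, Finset.sum_ite_eq, h0]
  have hδle : ∀ i j, δ i ≤ s i j ^ 2 := by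
    intro i j
    rw [hδ i]
    have hjr : j ≤ r := by
      rw [Fin.le_def]
      exact Nat.le_pred_of_lt j.isLt
    have h1 : s i r ≤ s i j := hmono i j r hjr
    exact pow_le_pow_left₀ (hnn i r) h1 2
  have hδnn : ∀ i, 0 ≤ δ i := fun i => (hδ i) ▸ sq_nonneg _
  -- squared norm of mulVec of C i
  have hCx : ∀ (i : Fin n) (x : Fin d → ℝ),
      sqNorm ((C i).mulVec x) = ∑ j, s i j ^ 2 * ((Y i)ᵀ.mulVec x j) ^ 2 := by
    intro i x
    rw [hSVD i, Matrix.mul_assoc, ← Matrix.mulVec_mulVec, sqNorm_mulVec_orth _ (hZ i),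
      ← Matrix.mulVec_mulVec]
    unfold sqNorm
    refine Finset.sum_congr rfl fun j _ => ?_
    rw [Matrix.mulVec_diagonal, mul_pow]
  have hQx : ∀ (i : Fin n) (x : Fin d → ℝ),
      sqNorm ((Q i.succ).mulVec x) = ∑ j, (s i j ^ 2 - δ i) * ((Y i)ᵀ.mulVec x j) ^ 2 := by
    intro i x
    rw [hQs i, ← Matrix.mulVec_mulVec]
    unfold sqNorm
    refine Finset.sum_congr rfl fun j _ => ?_
    rw [Matrix.mulVec_diagonal, mul_pow, Real.sq_sqrt (sub_nonneg.mpr (hδle i j))]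
  have hCx2 : ∀ (i : Fin n) (x : Fin d → ℝ),
      sqNorm ((C i).mulVec x) = sqNorm ((Q i.castSucc).mulVec x) + (A i ⬝ᵥ x) ^ 2 := by
    intro i x
    have h0 : (Q i.castSucc).mulVec x r = 0 := by
      show (Q i.castSucc r) ⬝ᵥ x = 0
      rw [hlast i.castSucc, zero_dotProduct]
    rw [hC i, mulVec_updateRow', sqNorm_update _ _ _ h0]
    ring
  -- key per-step inequality
  have key : ∀ (i : Fin n) (x : Fin d → ℝ),
      sqNorm ((Q i.castSucc).mulVec x) + (A i ⬝ᵥ x) ^ 2 - δ i * sqNorm x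
        ≤ sqNorm ((Q i.succ).mulVec x) := by
    intro i x
    have hwle : sqNorm ((Y i)ᵀ.mulVec x) ≤ sqNorm x :=
      sqNorm_transpose_mulVec_le (Y i) (hY i) x
    have hsum : ∑ j, (s i j ^ 2 - δ i) * ((Y i)ᵀ.mulVec x j) ^ 2
        = (∑ j, s i j ^ 2 * ((Y i)ᵀ.mulVec x j) ^ 2) - δ i * sqNorm ((Y i)ᵀ.mulVec x) := by
      rw [sqNorm, Finset.mul_sum, ← Finset.sum_sub_distrib]
      exact Finset.sum_congr rfl fun j _ => by ring
    rw [hQx i x, hsum, ← hCx i x, hCx2 i x]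
    have := mul_le_mul_of_nonneg_left hwle (hδnn i)
    linarith
  -- per-vector bound for Q at the end
  have hΔnn : 0 ≤ ∑ i, δ i := Finset.sum_nonneg fun i _ => hδnn i
  have pervec : ∀ x : Fin d → ℝ,
      sqNorm (A.mulVec x) - (∑ i, δ i) * sqNorm x ≤ sqNorm ((Q (Fin.last n)).mulVec x) := by
    intro x
    have htel := telescope_fin (fun i => sqNorm ((Q i).mulVec x))
    have hsumle : ∑ i : Fin n, ((A i ⬝ᵥ x) ^ 2 - δ i * sqNorm x)
        ≤ ∑ i : Fin n, (sqNorm ((Q i.succ).mulVec x) - sqNorm ((Q i.castSucc).mulVec x)) :=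
      Finset.sum_le_sum fun i _ => by have := key i x; linarith
    have h0 : sqNorm ((Q 0).mulVec x) = 0 := by
      rw [hQ0]; simp [sqNorm, Matrix.zero_mulVec]
    have hAx : sqNorm (A.mulVec x) = ∑ i : Fin n, (A i ⬝ᵥ x) ^ 2 := rfl
    rw [htel, h0, sub_zero] at hsumle
    rw [hAx]
    have hdist : ∑ i : Fin n, ((A i ⬝ᵥ x) ^ 2 - δ i * sqNorm x)
        = (∑ i : Fin n, (A i ⬝ᵥ x) ^ 2) - (∑ i, δ i) * sqNorm x := by
      rw [Finset.sum_sub_distrib, ← Finset.sum_mul]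
    linarith [hdist ▸ hsumle]
  -- Frobenius telescoping
  have hCf : ∀ i : Fin n, frobSq (C i) = ∑ j, s i j ^ 2 := by
    intro i
    rw [hSVD i, Matrix.mul_assoc, frobSq_mul_orth _ (hZ i), frobSq_eq_sum_rows]
    refine Finset.sum_congr rfl fun j _ => ?_
    have hrow : (Matrix.diagonal (s i) * (Y i)ᵀ) j = fun t => s i j * (Y i) t j := by
      ext t; simp [Matrix.mul_apply, Matrix.diagonal_apply, Finset.sum_ite_eq]
    rw [hrow]
    have hcol : (∑ t, ((Y i) t j) ^ 2) = 1 := by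
      have h := congrArg (fun M => M j j) (hY i)
      simpa [Matrix.mul_apply, Matrix.one_apply, sq] using h
    simp only [sqNorm, mul_pow]
    rw [← Finset.mul_sum, hcol, mul_one]
  have hQf : ∀ i : Fin n, frobSq (Q i.succ) = ∑ j, (s i j ^ 2 - δ i) := by
    intro i
    rw [hQs i, frobSq_eq_sum_rows]
    refine Finset.sum_congr rfl fun j _ => ?_
    have hrow : (Matrix.diagonal (fun j => Real.sqrt (s i j ^ 2 - δ i)) * (Y i)ᵀ) j
        = fun t => Real.sqrt (s i j ^ 2 - δ i) * (Y i) t j := by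
      ext t; simp [Matrix.mul_apply, Matrix.diagonal_apply, Finset.sum_ite_eq]
    rw [hrow]
    have hcol : (∑ t, ((Y i) t j) ^ 2) = 1 := by
      have h := congrArg (fun M => M j j) (hY i)
      simpa [Matrix.mul_apply, Matrix.one_apply, sq] using h
    simp only [sqNorm, mul_pow]
    rw [← Finset.mul_sum, hcol, mul_one, Real.sq_sqrt (sub_nonneg.mpr (hδle i j))]
  have hCf2 : ∀ i : Fin n, frobSq (C i) = sqNorm (A i) + frobSq (Q i.castSucc) := by
    intro i
    rw [hC i]
    exact frobSq_updateRow _ _ _ (hlast i.castSucc)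
  have frobstep : ∀ i : Fin n,
      frobSq (Q i.succ) - frobSq (Q i.castSucc) = sqNorm (A i) - ℓ * δ i := by
    intro i
    have h1 : frobSq (Q i.succ) = frobSq (C i) - ℓ * δ i := by
      rw [hQf i, hCf i, Finset.sum_sub_distrib, Finset.sum_const, Finset.card_univ,
        Fintype.card_fin, nsmul_eq_mul]
    rw [h1, hCf2 i]
    ring
  have frobQn : frobSq (Q (Fin.last n)) = frobSq A - ℓ * ∑ i, δ i := by
    have htel := telescope_fin (fun i => frobSq (Q i))
    simp only [frobstep] at htel
    have h0 : frobSq (Q 0) = 0 := by rw [hQ0]; simp [frobSq]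
    have hA : frobSq A = ∑ i : Fin n, sqNorm (A i) := rfl
    rw [h0, sub_zero] at htel
    rw [← htel, Finset.sum_sub_distrib, ← hA, Finset.mul_sum]
  -- orthogonal matrix V from v
  set V : Matrix (Fin d) (Fin d) ℝ := Matrix.of v with hV
  have hVVt : V * Vᵀ = 1 := by
    ext a b
    simp only [Matrix.mul_apply, Matrix.transpose_apply, Matrix.one_apply, hV, Matrix.of_apply]
    exact hv a b
  have hVtV : Vᵀ * V = 1 := mul_eq_one_comm.mp hVVt
  have frobQnV : frobSq (Q (Fin.last n)) = ∑ a, sqNorm ((Q (Fin.last n)).mulVec (v a)) := by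
    have h1 : frobSq (Q (Fin.last n) * Vᵀ) = frobSq (Q (Fin.last n)) := by
      rw [frobSq_eq_sum_rows, frobSq_eq_sum_rows (Q (Fin.last n))]
      refine Finset.sum_congr rfl fun j _ => ?_
      have h2 : (Q (Fin.last n) * Vᵀ) j = V.mulVec (Q (Fin.last n) j) := by
        ext a; simp [Matrix.mul_apply, Matrix.mulVec, dotProduct, mul_comm]
      rw [h2, sqNorm_mulVec_orth V hVtV]
    rw [← h1, frobSq_eq_sum_cols]
    refine Finset.sum_congr rfl fun a _ => congrArg sqNorm (funext fun j => ?_)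
    simp [Matrix.mul_apply, Matrix.mulVec, dotProduct, hV]
  -- unit vectors
  have hunit : ∀ a, sqNorm (v a) = 1 := by
    intro a
    have h := hv a a
    rw [if_pos rfl] at h
    rw [sqNorm, ← h]
    exact Finset.sum_congr rfl fun t _ => pow_two (v a t)
  -- the filtered set
  have hcardN : (Finset.univ.filter (fun i : Fin d => (i : ℕ) < k)).card ≤ k := by
    have h := Finset.card_le_card_of_injOn
      (s := Finset.univ.filter (fun i : Fin d => (i : ℕ) < k)) (t := Finset.range k)
      (fun i : Fin d => (i : ℕ))
      (fun a ha => Finset.mem_range.mpr (Finset.mem_filter.mp ha).2)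
      (fun a _ b _ hab => Fin.val_injective hab)
    simpa using h
  set F : Finset (Fin d) := Finset.univ.filter (fun i : Fin d => (i : ℕ) < k) with hF
  have hcard : (F.card : ℝ) ≤ (k : ℝ) := by exact_mod_cast hcardN
  have hsub : ∑ a ∈ F, sqNorm ((Q (Fin.last n)).mulVec (v a)) ≤ frobSq (Q (Fin.last n)) := by
    rw [frobQnV]
    exact Finset.sum_le_sum_of_subset_of_nonneg (Finset.subset_univ F)
      (fun a _ _ => sqNorm_nonneg' _)
  have hlower : ∑ a ∈ F, (sqNorm (A.mulVec (v a)) - ∑ i, δ i)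
      ≤ ∑ a ∈ F, sqNorm ((Q (Fin.last n)).mulVec (v a)) := by
    refine Finset.sum_le_sum fun a _ => ?_
    have h := pervec (v a)
    rw [hunit a, mul_one] at h
    exact h
  have hdistF : ∑ a ∈ F, (sqNorm (A.mulVec (v a)) - ∑ i, δ i)
      = (∑ a ∈ F, sqNorm (A.mulVec (v a))) - F.card * ∑ i, δ i := by
    rw [Finset.sum_sub_distrib, Finset.sum_const, nsmul_eq_mul]
  -- put it together
  have hℓk : (0 : ℝ) < (ℓ : ℝ) - (k : ℝ) := by
    have : (k : ℝ) < (ℓ : ℝ) := by exact_mod_cast hk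
    linarith
  rw [le_div_iff₀ hℓk]
  have hcardΔ : (F.card : ℝ) * ∑ i, δ i ≤ (k : ℝ) * ∑ i, δ i :=
    mul_le_mul_of_nonneg_right hcard hΔnn
  nlinarith [hdistF ▸ hlower, hsub, frobQn]
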